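/- Let X be a real Banach space and suppose the identity operator on X is (2,1)-summing (i.e. X has the Orlicz property). Then there is no strongly measurable Pettis integrable function f : [0,1] → X satisfying ‖P-∫_I f dμ‖_X ≥ μ(I)^{1/2} for every interval I contained in [0,1]. -/

import Mathlib

open MeasureTheory Filter Set
open scoped ENNReal NNReal Topology

/-- Lebesgue measure on `[0,1]`. -/
noncomputable def mu01 : Measure ℝ := volume.restrict (Set.Icc 0 1)

/-- `x` is the Pettis integral of `f` over the set `E` (w.r.t. the measure `μ`). -/
def IsPettisIntegralOn {X : Type*} [NormedAddCommGroup X] [NormedSpace ℝ X]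
    (f : ℝ → X) (μ : Measure ℝ) (E : Set ℝ) (x : X) : Prop :=
  ∀ φ : X →L[ℝ] ℝ, φ x = ∫ ω in E, φ (f ω) ∂μ

/-- `f` is Pettis integrable w.r.t. `μ`. -/
def PettisIntegrable {X : Type*} [NormedAddCommGroup X] [NormedSpace ℝ X]
    (f : ℝ → X) (μ : Measure ℝ) : Prop :=
  (∀ φ : X →L[ℝ] ℝ, Integrable (fun ω => φ (f ω)) μ) ∧
  ∀ E : Set ℝ, MeasurableSet E → ∃ x : X, IsPettisIntegralOn f μ E x

/-- The identity operator on `X` is `(q,1)`-summing. -/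
def IdSumming (X : Type*) [NormedAddCommGroup X] [NormedSpace ℝ X] (q : ℝ) : Prop :=
  ∃ C : ℝ, ∀ (n : ℕ) (x : Fin n → X),
    (∑ i, ‖x i‖ ^ q) ^ (1 / q) ≤
      C * ⨆ φ : {φ : X →L[ℝ] ℝ // ‖φ‖ ≤ 1}, ∑ i, |φ.1 (x i)|

lemma sup_abs_sum_le {X : Type*} [NormedAddCommGroup X] [NormedSpace ℝ X]
    {n : ℕ} (x : Fin n → X) {R : ℝ}
    (h : ∀ φ : X →L[ℝ] ℝ, ‖φ‖ ≤ 1 → ∀ s : Finset (Fin n), |∑ i ∈ s, φ (x i)| ≤ R) :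
    (⨆ φ : {φ : X →L[ℝ] ℝ // ‖φ‖ ≤ 1}, ∑ i, |φ.1 (x i)|) ≤ 2 * R := by
  classical
  haveI : Nonempty {φ : X →L[ℝ] ℝ // ‖φ‖ ≤ 1} := ⟨⟨0, by simp⟩⟩
  apply ciSup_le
  rintro ⟨φ, hφ⟩
  have hsplit := Finset.sum_filter_add_sum_filter_not Finset.univ
    (fun i => 0 ≤ φ (x i)) (fun i => |φ (x i)|)
  have h1 : ∑ i ∈ Finset.univ.filter (fun i => 0 ≤ φ (x i)), |φ (x i)|
      = ∑ i ∈ Finset.univ.filter (fun i => 0 ≤ φ (x i)), φ (x i) :=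
    Finset.sum_congr rfl fun i hi => abs_of_nonneg (Finset.mem_filter.mp hi).2
  have h2 : ∑ i ∈ Finset.univ.filter (fun i => ¬ 0 ≤ φ (x i)), |φ (x i)|
      = -∑ i ∈ Finset.univ.filter (fun i => ¬ 0 ≤ φ (x i)), φ (x i) := by
    rw [← Finset.sum_neg_distrib]
    exact Finset.sum_congr rfl fun i hi =>
      abs_of_neg (lt_of_not_ge (Finset.mem_filter.mp hi).2)
  have b1 := h φ hφ (Finset.univ.filter (fun i => 0 ≤ φ (x i)))
  have b2 := h φ hφ (Finset.univ.filter (fun i => ¬ 0 ≤ φ (x i)))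
  calc ∑ i, |φ (x i)|
      = ∑ i ∈ Finset.univ.filter (fun i => 0 ≤ φ (x i)), φ (x i)
        + (- ∑ i ∈ Finset.univ.filter (fun i => ¬ 0 ≤ φ (x i)), φ (x i)) := by
        rw [← h1, ← h2, hsplit]
    _ ≤ R + R := add_le_add ((le_abs_self _).trans b1) ((neg_le_abs _).trans b2)
    _ = 2 * R := by ring

theorem statement4 {X : Type*} [NormedAddCommGroup X] [NormedSpace ℝ X] [CompleteSpace X]
    (hOrlicz : IdSumming X 2) :
    ¬ ∃ f : ℝ → X, StronglyMeasurable f ∧ PettisIntegrable f mu01 ∧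
        ∀ a b : ℝ, 0 ≤ a → a ≤ b → b ≤ 1 →
          ∀ x : X, IsPettisIntegralOn f mu01 (Set.Icc a b) x → (b - a) ^ ((1 : ℝ) / 2) ≤ ‖x‖ := by
  classical
  rintro ⟨f, hf, ⟨hint, hex⟩, hlow⟩
  obtain ⟨C, hC⟩ := hOrlicz
  haveI : Nonempty {φ : X →L[ℝ] ℝ // ‖φ‖ ≤ 1} := ⟨⟨0, by simp⟩⟩
  haveI : IsFiniteMeasure mu01 := by
    constructor
    rw [mu01, Measure.restrict_apply_univ]
    simp [Real.volume_Icc]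
  haveI : NullSingletonClass mu01 := ⟨fun x => by unfold mu01; exact (Measure.absolutelyContinuous_of_le Measure.restrict_le_self) (measure_singleton x)⟩
  choose ν hν using hex
  have hkey : ∀ (E : Set ℝ) (hE : MeasurableSet E) (φ : X →L[ℝ] ℝ),
      φ (ν E hE) = ∫ ω in E, φ (f ω) ∂mu01 := fun E hE φ => hν E hE φ
  -- uniform bound on the range of ν
  obtain ⟨M, hM0, hM⟩ : ∃ M : ℝ, 0 ≤ M ∧ ∀ (E : Set ℝ) (hE : MeasurableSet E),
      ‖ν E hE‖ ≤ M := by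
    have hpt : ∀ φ : X →L[ℝ] ℝ, ∃ Cb : ℝ, ∀ E : {E : Set ℝ // MeasurableSet E},
        ‖(NormedSpace.inclusionInDoubleDual ℝ X (ν E.1 E.2)) φ‖ ≤ Cb := by
      intro φ
      refine ⟨∫ ω, ‖φ (f ω)‖ ∂mu01, fun E => ?_⟩
      rw [NormedSpace.dual_def, hkey E.1 E.2 φ]
      exact (norm_integral_le_integral_norm _).trans
        (setIntegral_le_integral (hint φ).norm (Eventually.of_forall fun ω => norm_nonneg _))
    obtain ⟨M₀, hM₀⟩ := banach_steinhaus hpt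
    refine ⟨max M₀ 0, le_max_right _ _, fun E hE => ?_⟩
    apply NormedSpace.norm_le_dual_bound ℝ _ (le_max_right _ _)
    intro φ
    have h1 : ‖(NormedSpace.inclusionInDoubleDual ℝ X (ν E hE)) φ‖
        ≤ ‖((fun E : {E : Set ℝ // MeasurableSet E} =>
            NormedSpace.inclusionInDoubleDual ℝ X (ν E.1 E.2)) ⟨E, hE⟩)‖ * ‖φ‖ :=
      ContinuousLinearMap.le_opNorm _ _
    rw [NormedSpace.dual_def] at h1
    exact h1.trans (mul_le_mul_of_nonneg_right
      ((hM₀ ⟨E, hE⟩).trans (le_max_left _ _)) (norm_nonneg φ))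
  -- C is positive
  have hCpos : 0 < C := by
    have h1 : (1:ℝ) ≤ ‖ν (Icc 0 1) measurableSet_Icc‖ := by
      have := hlow 0 1 le_rfl zero_le_one le_rfl (ν (Icc 0 1) measurableSet_Icc) (hν _ _)
      simpa using this
    have happ := hC 1 (fun _ => ν (Icc 0 1) measurableSet_Icc)
    set x₀ := ν (Icc 0 1) measurableSet_Icc
    set s := ⨆ φ : {φ : X →L[ℝ] ℝ // ‖φ‖ ≤ 1}, ∑ _i : Fin 1, |φ.1 x₀| with hs
    have hsle : s ≤ ‖x₀‖ := by
      apply ciSup_le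
      rintro ⟨φ, hφ⟩
      rw [Fin.sum_univ_one]
      calc |φ x₀| = ‖φ x₀‖ := (Real.norm_eq_abs _).symm
        _ ≤ ‖φ‖ * ‖x₀‖ := φ.le_opNorm _
        _ ≤ 1 * ‖x₀‖ := mul_le_mul_of_nonneg_right hφ (norm_nonneg _)
        _ = ‖x₀‖ := one_mul _
    have hs0 : 0 ≤ s := Real.iSup_nonneg fun φ => Finset.sum_nonneg fun i _ => abs_nonneg _
    have hlhs : (∑ _i : Fin 1, ‖x₀‖ ^ (2:ℝ)) ^ ((1:ℝ)/2) = ‖x₀‖ := by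
      rw [Fin.sum_univ_one, ← Real.rpow_mul (norm_nonneg _)]
      norm_num
    rw [hlhs] at happ
    nlinarith [happ, hsle, hs0, h1]
  have main_bound : ∀ (n : ℕ) (E : Fin n → Set ℝ) (hE : ∀ i, MeasurableSet (E i))
      (_ : Pairwise (Function.onFun Disjoint E)) (R : ℝ)
      (_ : ∀ (S : Set ℝ) (hS : MeasurableSet S), S ⊆ ⋃ i, E i → ‖ν S hS‖ ≤ R),
      (∑ i, ‖ν (E i) (hE i)‖ ^ (2:ℝ)) ^ ((1:ℝ)/2) ≤ C * (2 * R) := by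
    intro n E hE hdisj R hR
    have hRapp : ∀ φ : X →L[ℝ] ℝ, ‖φ‖ ≤ 1 → ∀ s : Finset (Fin n),
        |∑ i ∈ s, φ (ν (E i) (hE i))| ≤ R := by
      intro φ hφ s
      have hU : MeasurableSet (⋃ i ∈ s, E i) := s.measurableSet_biUnion (fun i _ => hE i)
      have hsum : ∑ i ∈ s, φ (ν (E i) (hE i)) = φ (ν (⋃ i ∈ s, E i) hU) := by
        rw [hkey _ hU φ]
        rw [integral_biUnion_finset s (fun i _ => hE i)
          (fun i _ j _ hij => hdisj hij) (fun i _ => (hint φ).integrableOn)]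
        exact (Finset.sum_congr rfl fun i _ => hkey _ _ φ)
      rw [hsum]
      calc |φ (ν _ hU)| = ‖φ (ν _ hU)‖ := (Real.norm_eq_abs _).symm
        _ ≤ ‖φ‖ * ‖ν _ hU‖ := φ.le_opNorm _
        _ ≤ 1 * R := mul_le_mul hφ
            (hR _ hU (Set.iUnion₂_subset fun i _ => Set.subset_iUnion E i))
            (norm_nonneg _) zero_le_one
        _ = R := one_mul R
    refine (hC n (fun i => ν (E i) (hE i))).trans ?_
    exact mul_le_mul_of_nonneg_left (sup_abs_sum_le (fun i => ν (E i) (hE i)) hRapp) hCpos.le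
  -- sets where f is large
  set B : ℕ → Set ℝ := fun m => {ω | (m:ℝ) < ‖f ω‖} with hB
  have hBmeas : ∀ m, MeasurableSet (B m) :=
    fun m => measurableSet_lt measurable_const hf.norm.measurable
  have hBanti : ∀ {j j' : ℕ}, j ≤ j' → B j' ⊆ B j := by
    intro j j' h ω hω
    have : (j:ℝ) ≤ (j':ℝ) := by exact_mod_cast h
    exact lt_of_le_of_lt this hω
  set ε : ℝ := 1 / (8 * C) with hε
  have hεpos : 0 < ε := by positivity
  have pieceA : ∀ m : ℕ, ∃ (E : Set ℝ) (hE : MeasurableSet E), E ⊆ B m ∧ ε ≤ ‖ν E hE‖ := by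
    intro m
    by_contra hcon
    push_neg at hcon
    set n : ℕ := 4 * m ^ 2 + 4 with hn
    have hn0 : 0 < n := by omega
    have hnR : (0:ℝ) < n := by exact_mod_cast hn0
    set a : Fin n → ℝ := fun i => (i : ℝ) / n with ha
    set b : Fin n → ℝ := fun i => ((i : ℝ) + 1) / n with hb
    have hba : ∀ i, b i - a i = 1 / n := by
      intro i; rw [ha, hb]; ring
    set E : Fin n → Set ℝ := fun i => Ioc (a i) (b i) ∩ B m with hEdef
    have hEmeas : ∀ i, MeasurableSet (E i) := fun i => measurableSet_Ioc.inter (hBmeas m)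
    have hEsub : ∀ i, E i ⊆ B m := fun i => inter_subset_right
    have hEdisj : Pairwise (Function.onFun Disjoint E) := by
      have key : ∀ i j : Fin n, (i:ℕ) < (j:ℕ) → Disjoint (Ioc (a i) (b i)) (Ioc (a j) (b j)) := by
        intro i j hlt
        apply Set.Ioc_disjoint_Ioc.mpr
        have hij : b i ≤ a j := by
          rw [ha, hb]
          apply div_le_div_of_nonneg_right ?_ hnR.le
          have : ((i:ℕ):ℝ) + 1 ≤ ((j:ℕ):ℝ) := by exact_mod_cast hlt
          exact this
        exact (min_le_left _ _).trans (hij.trans (le_max_right _ _))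
      intro i j hij
      rcases (Fin.val_injective.ne hij).lt_or_gt with h | h
      · exact ((key i j h).mono inter_subset_left inter_subset_left)
      · exact ((key j i h).mono inter_subset_left inter_subset_left).symm
    have hDmeas : ∀ i : Fin n, MeasurableSet (Ioc (a i) (b i) \ B m) :=
      fun i => measurableSet_Ioc.diff (hBmeas m)
    have hyxD : ∀ i, ν (Icc (a i) (b i)) measurableSet_Icc
        = ν (E i) (hEmeas i) + ν (Ioc (a i) (b i) \ B m) (hDmeas i) := by
      intro i
      apply (NormedSpace.eq_iff_forall_dual_eq ℝ).mpr
      intro φ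
      rw [map_add, hkey, hkey, hkey]
      have h1 : ∫ ω in Icc (a i) (b i), φ (f ω) ∂mu01
          = ∫ ω in Ioc (a i) (b i), φ (f ω) ∂mu01 :=
        (setIntegral_congr_set Ioc_ae_eq_Icc).symm
      have h2 := integral_inter_add_diff (μ := mu01) (s := Ioc (a i) (b i)) (t := B m)
        (hBmeas m) ((hint φ).integrableOn)
      rw [h1, ← h2]
    have hDnorm : ∀ i, ‖ν (Ioc (a i) (b i) \ B m) (hDmeas i)‖ ≤ (m : ℝ) / n := by
      intro i
      apply NormedSpace.norm_le_dual_bound ℝ _ (by positivity)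
      intro φ
      rw [hkey]
      have hfin : mu01 (Ioc (a i) (b i) \ B m) < ⊤ := measure_lt_top _ _
      have hbd : ∀ ω ∈ Ioc (a i) (b i) \ B m, ‖φ (f ω)‖ ≤ ‖φ‖ * m := by
        intro ω hω
        have h2 : ‖f ω‖ ≤ m := not_lt.mp hω.2
        calc ‖φ (f ω)‖ ≤ ‖φ‖ * ‖f ω‖ := φ.le_opNorm _
          _ ≤ ‖φ‖ * m := mul_le_mul_of_nonneg_left h2 (norm_nonneg _)
      have hμ : (mu01 (Ioc (a i) (b i) \ B m)).toReal ≤ 1 / n := by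
        apply ENNReal.toReal_le_of_le_ofReal (by positivity)
        calc mu01 (Ioc (a i) (b i) \ B m) ≤ mu01 (Ioc (a i) (b i)) := measure_mono diff_subset
          _ ≤ volume (Ioc (a i) (b i)) := by
              rw [mu01, Measure.restrict_apply measurableSet_Ioc]
              exact measure_mono inter_subset_left
          _ = ENNReal.ofReal (1 / n) := by rw [Real.volume_Ioc, hba i]
      calc ‖∫ ω in Ioc (a i) (b i) \ B m, φ (f ω) ∂mu01‖
          ≤ (‖φ‖ * m) * (mu01 (Ioc (a i) (b i) \ B m)).toReal :=
            norm_setIntegral_le_of_norm_le_const hfin hbd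
        _ ≤ (‖φ‖ * m) * (1/n) := by
            apply mul_le_mul_of_nonneg_left hμ (by positivity)
        _ = (m/n) * ‖φ‖ := by ring
    have hlowy : ∀ i, Real.sqrt (1/n) ≤ ‖ν (Icc (a i) (b i)) measurableSet_Icc‖ := by
      intro i
      have h₁ : 0 ≤ a i := by rw [ha]; positivity
      have h₂ : a i ≤ b i := by
        rw [ha, hb]
        apply div_le_div_of_nonneg_right (by linarith) hnR.le
      have h₃ : b i ≤ 1 := by
        rw [hb, div_le_one hnR]
        have : (i:ℝ) + 1 ≤ n := by exact_mod_cast Nat.succ_le_of_lt i.isLt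
        linarith
      have := hlow (a i) (b i) h₁ h₂ h₃ _ (hν (Icc (a i) (b i)) measurableSet_Icc)
      rw [hba i] at this
      rw [Real.sqrt_eq_rpow]
      exact this
    have hs : Real.sqrt n * Real.sqrt n = n := Real.mul_self_sqrt hnR.le
    have hspos : 0 < Real.sqrt n := Real.sqrt_pos.mpr hnR
    have h2m : 2 * (m:ℝ) ≤ Real.sqrt n := by
      have h1 : ((2 * (m:ℝ))) ^ 2 ≤ (n:ℝ) := by
        have hcast : ((n:ℝ)) = 4 * (m:ℝ)^2 + 4 := by rw [hn]; push_cast; ring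
        nlinarith [hcast]
      calc 2 * (m:ℝ) = Real.sqrt ((2*(m:ℝ))^2) := (Real.sqrt_sq (by positivity)).symm
        _ ≤ Real.sqrt n := Real.sqrt_le_sqrt h1
    have hmn : (m:ℝ)/n ≤ Real.sqrt (1/n) / 2 := by
      rw [one_div, Real.sqrt_inv, ← one_div, div_div]
      rw [div_le_div_iff₀ hnR (by positivity)]
      nlinarith [hs, h2m, hspos]
    have hxlow : ∀ i, Real.sqrt (1/n) / 2 ≤ ‖ν (E i) (hEmeas i)‖ := by
      intro i
      have htri : ‖ν (Icc (a i) (b i)) measurableSet_Icc‖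
          ≤ ‖ν (E i) (hEmeas i)‖ + ‖ν (Ioc (a i) (b i) \ B m) (hDmeas i)‖ := by
        rw [hyxD i]; exact norm_add_le _ _
      have hd := hDnorm i
      have hl := hlowy i
      linarith [hmn]
    have hsum : (1:ℝ)/4 ≤ ∑ i, ‖ν (E i) (hEmeas i)‖ ^ (2:ℝ) := by
      have hterm : ∀ i : Fin n, ((1:ℝ)/n)/4 ≤ ‖ν (E i) (hEmeas i)‖ ^ (2:ℝ) := by
        intro i
        have h0 : (0:ℝ) ≤ Real.sqrt (1/n) / 2 := by positivity
        have hr := Real.rpow_le_rpow h0 (hxlow i) (by norm_num : (0:ℝ) ≤ 2)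
        refine le_trans (le_of_eq ?_) hr
        rw [Real.rpow_two, div_pow, Real.sq_sqrt (by positivity : (0:ℝ) ≤ 1/n)]
        norm_num
      calc (1:ℝ)/4 = (n:ℝ) * (((1:ℝ)/n)/4) := by field_simp
        _ = ∑ _i : Fin n, ((1:ℝ)/n)/4 := by
            rw [Finset.sum_const, Finset.card_univ, Fintype.card_fin, nsmul_eq_mul]
        _ ≤ ∑ i, ‖ν (E i) (hEmeas i)‖ ^ (2:ℝ) := Finset.sum_le_sum (fun i _ => hterm i)
    have hRε : ∀ (S : Set ℝ) (hS : MeasurableSet S), S ⊆ ⋃ i, E i → ‖ν S hS‖ ≤ ε := by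
      intro S hS hsub
      exact (hcon S hS (hsub.trans (Set.iUnion_subset hEsub))).le
    have hup := main_bound n E hEmeas hEdisj ε hRε
    have hlhs : ((1:ℝ)/4) ^ ((1:ℝ)/2) ≤ (∑ i, ‖ν (E i) (hEmeas i)‖ ^ (2:ℝ)) ^ ((1:ℝ)/2) :=
      Real.rpow_le_rpow (by norm_num) hsum (by norm_num)
    have hhalf : ((1:ℝ)/4) ^ ((1:ℝ)/2) = 1/2 := by
      rw [← Real.sqrt_eq_rpow, show (1/4:ℝ) = (1/2)^2 by norm_num,
        Real.sqrt_sq (by norm_num : (0:ℝ) ≤ 1/2)]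
    rw [hhalf] at hlhs
    have hCε : C * (2 * ε) = 1/4 := by
      rw [hε]; field_simp; ring
    linarith [hup, hlhs]
  have htend : ∀ ψ : X →L[ℝ] ℝ,
      Tendsto (fun j : ℕ => ∫ ω in B j, ‖ψ (f ω)‖ ∂mu01) atTop (𝓝 0) := by
    intro ψ
    have hSM : StronglyMeasurable (fun ω => ‖ψ (f ω)‖) :=
      (ψ.continuous.comp_stronglyMeasurable hf).norm
    have h_bound : ∀ j : ℕ, ∀ ω, ‖(B j).indicator (fun ω => ‖ψ (f ω)‖) ω‖ ≤ ‖ψ (f ω)‖ := by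
      intro j ω
      by_cases hω : ω ∈ B j
      · rw [Set.indicator_of_mem hω, norm_norm]
      · rw [Set.indicator_of_notMem hω, norm_zero]; exact norm_nonneg _
    have h_lim : ∀ ω, Tendsto (fun j : ℕ => (B j).indicator (fun ω => ‖ψ (f ω)‖) ω)
        atTop (𝓝 0) := by
      intro ω
      obtain ⟨N, hN⟩ := exists_nat_ge ‖f ω‖
      apply tendsto_atTop_of_eventually_const (i₀ := N)
      intro j hj
      apply Set.indicator_of_notMem
      intro hmem
      have h1 : (j:ℝ) < ‖f ω‖ := hmem
      have h2 : (N:ℝ) ≤ (j:ℝ) := by exact_mod_cast hj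
      linarith
    have hDCT := tendsto_integral_of_dominated_convergence (μ := mu01)
      (bound := fun ω => ‖ψ (f ω)‖)
      (F := fun j ω => (B j).indicator (fun ω => ‖ψ (f ω)‖) ω)
      (f := fun _ => (0:ℝ))
      (fun j => ((hSM.indicator (hBmeas j)).aestronglyMeasurable))
      ((hint ψ).norm)
      (fun j => Eventually.of_forall (h_bound j))
      (Eventually.of_forall h_lim)
    rw [integral_zero] at hDCT
    apply hDCT.congr
    intro j
    exact integral_indicator (hBmeas j)
  -- infinitely many disjoint sets with big measure values
  obtain ⟨FF, hFmeas, hFdisj, hFnorm⟩ : ∃ (F : ℕ → Set ℝ) (hFm : ∀ k, MeasurableSet (F k)),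
      Pairwise (Function.onFun Disjoint F) ∧ ∀ k, ε/2 ≤ ‖ν (F k) (hFm k)‖ := by
    choose Em hEmMeas hEmSub hEmNorm using pieceA
    have hne : ∀ j : ℕ, ν (Em j) (hEmMeas j) ≠ 0 := by
      intro j h
      have := hEmNorm j
      rw [h, norm_zero] at this
      linarith
    choose φn hφnorm hφval using fun j => exists_dual_vector ℝ (ν (Em j) (hEmMeas j)) (norm_ne_zero_iff.mpr (hne j))
    have hnext : ∀ j : ℕ, ∃ N, j < N ∧ ∫ ω in B N, ‖(φn j) (f ω)‖ ∂mu01 ≤ ε/4 := by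
      intro j
      have h1 := (htend (φn j)).eventually_lt_const (by positivity : (0:ℝ) < ε/4)
      obtain ⟨N, hN1, hN2⟩ := (h1.and (eventually_gt_atTop j)).exists
      exact ⟨N, hN2, hN1.le⟩
    choose nxt hnxt1 hnxt2 using hnext
    set mseq : ℕ → ℕ := fun k => Nat.rec 0 (fun _ p => nxt p) k with hmseq
    have hmono : StrictMono mseq :=
      strictMono_nat_of_lt_succ (fun k => hnxt1 (mseq k))
    refine ⟨fun k => Em (mseq k) \ B (mseq (k+1)),
      fun k => (hEmMeas _).diff (hBmeas _), ?_, ?_⟩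
    · have key : ∀ k l, k < l →
          Disjoint (Em (mseq k) \ B (mseq (k+1))) (Em (mseq l) \ B (mseq (l+1))) := by
        intro k l hkl
        rw [Set.disjoint_left]
        intro ω hω hω'
        have h1 : ω ∈ B (mseq l) := hEmSub (mseq l) hω'.1
        have h2 : ω ∈ B (mseq (k+1)) := hBanti (hmono.monotone hkl) h1
        exact hω.2 h2
      intro k l hkl
      rcases hkl.lt_or_gt with h | h
      · exact key k l h
      · exact (key l k h).symm
    · intro k
      have hsp : ∫ ω in Em (mseq k) ∩ B (mseq (k+1)), (φn (mseq k)) (f ω) ∂mu01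
          + ∫ ω in Em (mseq k) \ B (mseq (k+1)), (φn (mseq k)) (f ω) ∂mu01
          = ∫ ω in Em (mseq k), (φn (mseq k)) (f ω) ∂mu01 :=
        integral_inter_add_diff (hBmeas _) ((hint (φn (mseq k))).integrableOn)
      have hval : (φn (mseq k)) (ν (Em (mseq k)) (hEmMeas _))
          = ‖ν (Em (mseq k)) (hEmMeas _)‖ := by
        simpa using hφval (mseq k)
      have hε1 : ε ≤ ∫ ω in Em (mseq k), (φn (mseq k)) (f ω) ∂mu01 := by
        rw [← hkey (Em (mseq k)) (hEmMeas _) (φn (mseq k)), hval]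
        exact hEmNorm (mseq k)
      have hsmall : |∫ ω in Em (mseq k) ∩ B (mseq (k+1)), (φn (mseq k)) (f ω) ∂mu01| ≤ ε/4 := by
        have h1 : |∫ ω in Em (mseq k) ∩ B (mseq (k+1)), (φn (mseq k)) (f ω) ∂mu01|
            ≤ ∫ ω in Em (mseq k) ∩ B (mseq (k+1)), ‖(φn (mseq k)) (f ω)‖ ∂mu01 := by
          rw [← Real.norm_eq_abs]; exact norm_integral_le_integral_norm _
        have h2 : ∫ ω in Em (mseq k) ∩ B (mseq (k+1)), ‖(φn (mseq k)) (f ω)‖ ∂mu01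
            ≤ ∫ ω in B (mseq (k+1)), ‖(φn (mseq k)) (f ω)‖ ∂mu01 :=
          setIntegral_mono_set ((hint (φn (mseq k))).norm.integrableOn)
            (Eventually.of_forall fun ω => norm_nonneg _)
            (HasSubset.Subset.eventuallyLE inter_subset_right)
        have h3 : ∫ ω in B (mseq (k+1)), ‖(φn (mseq k)) (f ω)‖ ∂mu01 ≤ ε/4 :=
          hnxt2 (mseq k)
        linarith
      have hψF : ε - ε/4 ≤ (φn (mseq k)) (ν (Em (mseq k) \ B (mseq (k+1)))
          ((hEmMeas _).diff (hBmeas _))) := by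
        rw [hkey]
        have heq : ∫ ω in Em (mseq k) \ B (mseq (k+1)), (φn (mseq k)) (f ω) ∂mu01
            = ∫ ω in Em (mseq k), (φn (mseq k)) (f ω) ∂mu01
              - ∫ ω in Em (mseq k) ∩ B (mseq (k+1)), (φn (mseq k)) (f ω) ∂mu01 := by
          linarith
        rw [heq]
        have := abs_le.mp hsmall
        linarith
      have hfinal : (φn (mseq k)) (ν (Em (mseq k) \ B (mseq (k+1))) ((hEmMeas _).diff (hBmeas _)))
          ≤ ‖ν (Em (mseq k) \ B (mseq (k+1))) ((hEmMeas _).diff (hBmeas _))‖ := by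
        calc (φn (mseq k)) _ ≤ |(φn (mseq k)) _| := le_abs_self _
          _ = ‖(φn (mseq k)) _‖ := (Real.norm_eq_abs _).symm
          _ ≤ ‖φn (mseq k)‖ * ‖_‖ := (φn (mseq k)).le_opNorm _
          _ = ‖_‖ := by rw [hφnorm (mseq k), one_mul]
      linarith
  -- final contradiction
  have hchain : ∀ n : ℕ, Real.sqrt n * (ε/2) ≤ C * (2 * M) := by
    intro n
    have h := main_bound n (fun k => FF k) (fun k => hFmeas k)
      (fun k l hkl => hFdisj (Fin.val_injective.ne hkl)) M (fun S hS _ => hM S hS)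
    have hterm : ∀ k : Fin n, (ε/2) ^ (2:ℝ) ≤ ‖ν (FF k) (hFmeas k)‖ ^ (2:ℝ) :=
      fun k => Real.rpow_le_rpow (by positivity) (hFnorm k) (by norm_num)
    have hsum : (n:ℝ) * (ε/2)^(2:ℝ) ≤ ∑ k : Fin n, ‖ν (FF k) (hFmeas k)‖ ^ (2:ℝ) := by
      calc (n:ℝ) * (ε/2)^(2:ℝ) = ∑ _k : Fin n, (ε/2)^(2:ℝ) := by
            rw [Finset.sum_const, Finset.card_univ, Fintype.card_fin, nsmul_eq_mul]
        _ ≤ _ := Finset.sum_le_sum fun k _ => hterm k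
    have hlhs : Real.sqrt ((n:ℝ) * (ε/2)^(2:ℝ)) ≤ C * (2 * M) := by
      rw [Real.sqrt_eq_rpow]
      exact le_trans (Real.rpow_le_rpow (by positivity) hsum (by norm_num)) h
    rw [Real.sqrt_mul (by positivity) , Real.rpow_two, Real.sqrt_sq (by positivity)] at hlhs
    exact hlhs
  obtain ⟨n, hn⟩ := exists_nat_gt ((C * (2*M) / (ε/2))^2)
  have h1 : Real.sqrt ((C * (2*M)/(ε/2))^2) < Real.sqrt n := Real.sqrt_lt_sqrt (sq_nonneg _) hn
  rw [Real.sqrt_sq_eq_abs] at h1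
  have h3 : Real.sqrt n ≤ C * (2*M) / (ε/2) := by
    rw [le_div_iff₀ (by positivity)]
    exact hchain n
  have h4 := (le_abs_self (C * (2*M)/(ε/2))).trans_lt h1
  linarith
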